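/- Let Ξ be the set of pairs of summable nonnegative sequences (p, q) with Σp_i ≤ 1/4, q_i ≤ 1/2 for all i, q_i + q_j ≤ 3/4 for all i ≠ j, and Σp_i + Σq_i = 1. Then the infimum over Ξ of the Shannon entropy H(p,q) of the combined sequence equals 3/2 bits, attained at p = (1/4, 0, 0, ...), q = (1/2, 1/4, 0, 0, ...). -/

import Mathlib

open scoped ENNReal

/-- Membership in the constraint set `Ξ`. -/
def memXi (p q : ℕ → ℝ) : Prop :=
  (∀ i, 0 ≤ p i) ∧ (∀ i, 0 ≤ q i) ∧ Summable p ∧ Summable q ∧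
  (∑' i, p i) ≤ 1 / 4 ∧ (∀ i, q i ≤ 1 / 2) ∧
  (∀ i j, i ≠ j → q i + q j ≤ 3 / 4) ∧
  (∑' i, p i) + (∑' i, q i) = 1

/-- Elementary inequality: `t log t ≤ 2 log 2 (t - 1)` on `[1, 2]`. -/
lemma aux_key_t (t : ℝ) (h1 : 1 ≤ t) (h2 : t ≤ 2) :
    t * Real.log t ≤ 2 * Real.log 2 * (t - 1) := by
  have hl2 : (0:ℝ) < Real.log 2 := Real.log_pos (by norm_num)
  have ht0 : (0:ℝ) < t := by linarith
  rcases le_or_gt t (2 * Real.log 2) with h | h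
  · have hlog : Real.log t ≤ t - 1 := Real.log_le_sub_one_of_pos ht0
    nlinarith [Real.log_nonneg h1]
  · have h1' : Real.log (t / 2) ≤ t / 2 - 1 := Real.log_le_sub_one_of_pos (by positivity)
    have h2' : Real.log (t / 2) = Real.log t - Real.log 2 := by
      rw [Real.log_div (by linarith) (by norm_num)]
    have hlog : Real.log t ≤ Real.log 2 + t / 2 - 1 := by linarith
    nlinarith [hlog]

/-- Chord bound for the `p` part: on `[0, 1/4]`, `-x log x ≥ (2 log 2) x`. -/
lemma aux_p_pointwise (x : ℝ) (h0 : 0 ≤ x) (h : x ≤ 1/4) :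
    2 * Real.log 2 * x ≤ Real.negMulLog x := by
  rcases eq_or_lt_of_le h0 with h0' | h0'
  · simp [← h0', Real.negMulLog]
  · rw [Real.negMulLog]
    have hlog : Real.log x ≤ Real.log (1/4) := Real.log_le_log h0' h
    have : Real.log (1/4) = -(2 * Real.log 2) := by
      rw [show (1/4 : ℝ) = 2 ^ (-2 : ℤ) by norm_num, Real.log_zpow]
      push_cast; ring
    nlinarith

/-- Chord bound for the `q` part: on `[0, 1/2]`,
`-x log x ≥ (2 log 2) x - (2 log 2) max (x - 1/4) 0`. -/
lemma aux_q_pointwise (x : ℝ) (h0 : 0 ≤ x) (h : x ≤ 1/2) :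
    2 * Real.log 2 * x - 2 * Real.log 2 * max (x - 1/4) 0 ≤ Real.negMulLog x := by
  have hl2 : (0:ℝ) < Real.log 2 := Real.log_pos (by norm_num)
  rcases le_or_gt x (1/4) with hx | hx
  · rw [max_eq_right (by linarith)]
    simpa using aux_p_pointwise x h0 hx
  · rw [max_eq_left (by linarith), Real.negMulLog]
    have hk := aux_key_t (4 * x) (by linarith) (by linarith)
    have hlog : Real.log (4 * x) = 2 * Real.log 2 + Real.log x := by
      rw [show (4:ℝ) * x = 2^2 * x by ring, Real.log_mul (by norm_num) (by linarith),
        Real.log_pow]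
      push_cast; ring
    rw [hlog] at hk
    nlinarith

/-- The total excess over `1/4` is at most `1/4`. -/
lemma aux_e_sum (q : ℕ → ℝ) (hq0 : ∀ i, 0 ≤ q i) (hq2 : ∀ i, q i ≤ 1/2)
    (hpair : ∀ i j, i ≠ j → q i + q j ≤ 3/4) (hsum : Summable q)
    (hT : (∑' i, q i) ≤ 1) : (∑' i, max (q i - 1/4) 0) ≤ 1/4 := by
  have hse : Summable (fun i => max (q i - 1/4) 0) := by
    apply Summable.of_nonneg_of_le (fun i => le_max_right _ _)
      (fun i => max_le (by linarith [hq2 i, hq0 i]) (by linarith [hq0 i])) hsum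
  apply Summable.tsum_le_of_sum_le hse
  intro s
  classical
  set F := s.filter (fun i => 1/4 < q i) with hF
  have hstep : ∑ i ∈ s, max (q i - 1/4) 0 = ∑ i ∈ F, (q i - 1/4) := by
    rw [← Finset.sum_filter_add_sum_filter_not s (fun i => 1/4 < q i)]
    have h1 : ∑ i ∈ s.filter (fun i => ¬ 1/4 < q i), max (q i - 1/4) 0 = 0 := by
      apply Finset.sum_eq_zero
      intro i hi
      simp only [Finset.mem_filter, not_lt] at hi
      exact max_eq_right (by linarith [hi.2])
    rw [h1, add_zero]
    apply Finset.sum_congr rfl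
    intro i hi
    simp only [hF, Finset.mem_filter] at hi
    exact max_eq_left (by linarith [hi.2])
  rw [hstep]
  have hmemF : ∀ i ∈ F, 1/4 < q i := by
    intro i hi; simp only [hF, Finset.mem_filter] at hi; exact hi.2
  rcases Nat.lt_or_ge F.card 3 with hc | hc
  · interval_cases h : F.card
    · rw [Finset.card_eq_zero.mp h]; norm_num
    · obtain ⟨a, ha⟩ := Finset.card_eq_one.mp h
      rw [ha, Finset.sum_singleton]
      linarith [hq2 a]
    · obtain ⟨a, b, hab, hab2⟩ := Finset.card_eq_two.mp h
      rw [hab2, Finset.sum_insert (by simp [hab]), Finset.sum_singleton]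
      linarith [hpair a b hab]
  · have hsub : ∑ i ∈ F, q i ≤ 1 := le_trans (Summable.sum_le_tsum F (fun i _ => hq0 i) hsum) hT
    have heq : ∑ i ∈ F, (q i - 1/4) = (∑ i ∈ F, q i) - (F.card : ℝ) / 4 := by
      rw [Finset.sum_sub_distrib]
      simp
      ring
    have hcard : (3 : ℝ) ≤ (F.card : ℝ) := by exact_mod_cast hc
    rw [heq]
    linarith

/-- The real-valued lower bound. -/
lemma aux_real_main (p q : ℕ → ℝ) (hmem : memXi p q)
    (hp : Summable (fun i => Real.negMulLog (p i)))
    (hq : Summable (fun i => Real.negMulLog (q i))) :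
    3 / 2 * Real.log 2 ≤ (∑' i, Real.negMulLog (p i)) + ∑' i, Real.negMulLog (q i) := by
  obtain ⟨hp0, hq0, hps, hqs, hpsum, hq2, hpair, htot⟩ := hmem
  have hl2 : (0:ℝ) < Real.log 2 := Real.log_pos (by norm_num)
  have hpbd : ∀ i, p i ≤ 1/4 := fun i =>
    le_trans (Summable.le_tsum hps i (fun j _ => hp0 j)) hpsum
  have hP : 2 * Real.log 2 * (∑' i, p i) ≤ ∑' i, Real.negMulLog (p i) := by
    rw [← tsum_mul_left]
    exact Summable.tsum_le_tsum (fun i => aux_p_pointwise (p i) (hp0 i) (hpbd i)) (hps.mul_left _) hp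
  have hqsum1 : (∑' i, q i) ≤ 1 := by
    have : 0 ≤ ∑' i, p i := tsum_nonneg hp0
    linarith
  have hse : Summable (fun i => max (q i - 1/4) 0) :=
    Summable.of_nonneg_of_le (fun i => le_max_right _ _)
      (fun i => max_le (by linarith [hq2 i, hq0 i]) (by linarith [hq0 i])) hqs
  have hQ : 2 * Real.log 2 * (∑' i, q i) - 2 * Real.log 2 * (∑' i, max (q i - 1/4) 0)
      ≤ ∑' i, Real.negMulLog (q i) := by
    rw [← tsum_mul_left, ← tsum_mul_left, ← Summable.tsum_sub ((hqs.mul_left _)) (hse.mul_left _)]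
    exact Summable.tsum_le_tsum (fun i => aux_q_pointwise (q i) (hq0 i) (hq2 i))
      ((hqs.mul_left _).sub (hse.mul_left _)) hq
  have hE := aux_e_sum q hq0 hq2 hpair hqs hqsum1
  nlinarith [hP, hQ, hE, htot]

/-- If an `ENNReal.ofReal` tsum is finite, the (nonnegative) function is summable. -/
lemma aux_summable_of_finite (f : ℕ → ℝ) (h0 : ∀ i, 0 ≤ f i)
    (h : (∑' i, ENNReal.ofReal (f i)) ≠ ⊤) : Summable f := by
  have h' : (∑' i, ((Real.toNNReal (f i)) : ℝ≥0∞)) ≠ ⊤ := by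
    simpa [ENNReal.ofReal] using h
  have hs := ENNReal.tsum_coe_ne_top_iff_summable.mp h'
  have hs2 := NNReal.summable_coe.mpr hs
  have : (fun i => ((Real.toNNReal (f i)) : ℝ)) = f := by
    funext i; exact Real.coe_toNNReal _ (h0 i)
  rwa [this] at hs2

lemma aux_part1 (p q : ℕ → ℝ) (hmem : memXi p q) :
    (3 / 2 : ℝ≥0∞) ≤
      (∑' i, ENNReal.ofReal (Real.negMulLog (p i)) +
        ∑' i, ENNReal.ofReal (Real.negMulLog (q i))) / ENNReal.ofReal (Real.log 2) := by
  have hl2 : (0:ℝ) < Real.log 2 := Real.log_pos (by norm_num)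
  have hc0 : ENNReal.ofReal (Real.log 2) ≠ 0 := by
    simp [ENNReal.ofReal_eq_zero]; linarith
  rw [ENNReal.le_div_iff_mul_le (Or.inl hc0) (Or.inl ENNReal.ofReal_ne_top)]
  by_cases hA : (∑' i, ENNReal.ofReal (Real.negMulLog (p i))) = ⊤
  · rw [hA]; simp
  by_cases hB : (∑' i, ENNReal.ofReal (Real.negMulLog (q i))) = ⊤
  · rw [hB]; simp
  obtain ⟨hp0, hq0, hps, hqs, hpsum, hq2, hpair, htot⟩ := hmem
  have hpbd : ∀ i, p i ≤ 1/4 := fun i =>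
    le_trans (Summable.le_tsum hps i (fun j _ => hp0 j)) hpsum
  have hpn : ∀ i, 0 ≤ Real.negMulLog (p i) := fun i =>
    Real.negMulLog_nonneg (hp0 i) (by linarith [hpbd i])
  have hqn : ∀ i, 0 ≤ Real.negMulLog (q i) := fun i =>
    Real.negMulLog_nonneg (hq0 i) (by linarith [hq2 i])
  have hpS := aux_summable_of_finite _ hpn hA
  have hqS := aux_summable_of_finite _ hqn hB
  rw [← ENNReal.ofReal_tsum_of_nonneg hpn hpS, ← ENNReal.ofReal_tsum_of_nonneg hqn hqS,
    ← ENNReal.ofReal_add (tsum_nonneg hpn) (tsum_nonneg hqn)]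
  have h32 : (3/2 : ℝ≥0∞) = ENNReal.ofReal (3/2) := by
    rw [ENNReal.ofReal_div_of_pos (by norm_num)]
    norm_num
  rw [h32, ← ENNReal.ofReal_mul (by norm_num)]
  exact ENNReal.ofReal_le_ofReal
    (aux_real_main p q ⟨hp0, hq0, hps, hqs, hpsum, hq2, hpair, htot⟩ hpS hqS)

lemma aux_part2 : memXi (fun i => if i = 0 then 1 / 4 else 0)
    (fun i => if i = 0 then 1 / 2 else if i = 1 then 1 / 4 else 0) := by
  have hps : Summable (fun i : ℕ => if i = 0 then (1/4 : ℝ) else 0) :=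
    summable_of_ne_finset_zero (s := {0}) (by intro b hb; simp at hb; simp [hb])
  have hqs : Summable (fun i : ℕ => if i = 0 then (1/2 : ℝ) else if i = 1 then 1/4 else 0) :=
    summable_of_ne_finset_zero (s := {0, 1}) (by intro b hb; simp at hb; simp [hb.1, hb.2])
  have hpt : (∑' i : ℕ, if i = 0 then (1/4 : ℝ) else 0) = 1/4 := tsum_ite_eq 0 (fun _ => (1/4 : ℝ))
  have hqt : (∑' i : ℕ, if i = 0 then (1/2 : ℝ) else if i = 1 then 1/4 else 0) = 3/4 := by
    rw [tsum_eq_sum (s := {0, 1}) (by intro b hb; simp at hb; simp [hb.1, hb.2])]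
    norm_num
  refine ⟨?_, ?_, hps, hqs, ?_, ?_, ?_, ?_⟩
  · intro i; dsimp only; split <;> norm_num
  · intro i; dsimp only; split <;> [norm_num; split <;> norm_num]
  · rw [hpt]
  · intro i; dsimp only; split <;> [norm_num; split <;> norm_num]
  · intro i j hij
    by_cases hi : i = 0 <;> by_cases hj : j = 0 <;> by_cases hi1 : i = 1 <;>
      by_cases hj1 : j = 1 <;> simp_all <;> norm_num
  · rw [hpt, hqt]; norm_num

lemma aux_part3 :
    ((∑' i, Real.negMulLog ((fun i : ℕ => if i = 0 then (1 / 4 : ℝ) else 0) i)) +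
      ∑' i, Real.negMulLog
        ((fun i : ℕ => if i = 0 then (1 / 2 : ℝ) else if i = 1 then 1 / 4 else 0) i)) /
      Real.log 2 = 3 / 2 := by
  have hl2 : (0:ℝ) < Real.log 2 := Real.log_pos (by norm_num)
  have h4 : Real.log (1/4 : ℝ) = -(2 * Real.log 2) := by
    rw [show (1/4 : ℝ) = 2 ^ (-2 : ℤ) by norm_num, Real.log_zpow]
    push_cast; ring
  have h2 : Real.log (1/2 : ℝ) = -Real.log 2 := by
    rw [one_div, Real.log_inv]
  have h4' : Real.log (4:ℝ) = 2 * Real.log 2 := by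
    rw [show (4:ℝ) = 2^2 by norm_num, Real.log_pow]; push_cast; ring
  have hA : (∑' i, Real.negMulLog ((fun i : ℕ => if i = 0 then (1 / 4 : ℝ) else 0) i))
      = 1/2 * Real.log 2 := by
    rw [tsum_eq_sum (s := {0}) (by intro b hb; simp at hb; simp [hb, Real.negMulLog])]
    simp [Real.negMulLog, h4, h4']
    ring
  have hB : (∑' i, Real.negMulLog
      ((fun i : ℕ => if i = 0 then (1 / 2 : ℝ) else if i = 1 then 1 / 4 else 0) i))
      = Real.log 2 := by
    rw [tsum_eq_sum (s := {0, 1}) (by intro b hb; simp at hb; simp [hb.1, hb.2, Real.negMulLog])]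
    simp [Real.negMulLog, h4, h4', h2]
    ring
  rw [hA, hB]
  field_simp
  ring

/-- Over the constraint set `Ξ`, the Shannon entropy in bits of the
combined sequence `(p, q)` is at least `3/2`, and the value `3/2` is attained at
`p = (1/4, 0, 0, …)`, `q = (1/2, 1/4, 0, 0, …)` (which lies in `Ξ`); hence the
infimum equals `3/2` bits.  The lower bound is stated in `ℝ≥0∞` (entropy terms
`-p_i log₂ p_i` are nonnegative) to account for possibly infinite entropy. -/
theorem stmt7 :
    (∀ p q : ℕ → ℝ, memXi p q →
      (3 / 2 : ℝ≥0∞) ≤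
        (∑' i, ENNReal.ofReal (Real.negMulLog (p i)) +
          ∑' i, ENNReal.ofReal (Real.negMulLog (q i))) / ENNReal.ofReal (Real.log 2)) ∧
    memXi (fun i => if i = 0 then 1 / 4 else 0)
      (fun i => if i = 0 then 1 / 2 else if i = 1 then 1 / 4 else 0) ∧
    ((∑' i, Real.negMulLog ((fun i : ℕ => if i = 0 then (1 / 4 : ℝ) else 0) i)) +
      ∑' i, Real.negMulLog
        ((fun i : ℕ => if i = 0 then (1 / 2 : ℝ) else if i = 1 then 1 / 4 else 0) i)) /
      Real.log 2 = 3 / 2 := by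
  exact ⟨aux_part1, aux_part2, aux_part3⟩
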